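/- On a weak almost para-S-manifold, h_i ξ_j = 0 for all i, j, where h_i = (1/2) £_{ξ_i} f. -/
import Mathlib


open scoped BigOperators

noncomputable section

variable (C V : Type*) [CommRing C] [Algebra ℝ C] [AddCommGroup V]
  [Module ℝ V] [Module C V] [IsScalarTower ℝ C V]

/-- A metric weak para-f-structure on a manifold, modelled algebraically:
`C` plays the role of the ring of smooth functions, `V` the `C`-module of vector fields
with Lie bracket `b` and derivation action `act` of vector fields on functions,
`g` is a compatible pseudo-Riemannian metric (with `f` of rank `2n`, encoded by `hrank`)
and `nabla` its Levi-Civita connection (torsion-free and metric). -/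
structure MWPF (p : ℕ) where
  f : V →ₗ[C] V
  Q : V →ₗ[C] V
  ξ : Fin p → V
  η : Fin p → V →ₗ[C] C
  g : V →ₗ[C] V →ₗ[C] C
  b : V → V → V
  act : V → C → C
  nabla : V → V → V
  hQbij : Function.Bijective Q
  hf2 : ∀ X, f (f X) = Q X - ∑ i, η i X • ξ i
  hf3 : ∀ X, f (f (f X)) = f (Q X)
  hetaxi : ∀ i j, η i (ξ j) = if i = j then (1 : C) else 0
  hQxi : ∀ i, Q (ξ i) = ξ i
  hrange : ∀ X : V, X ∈ LinearMap.range f ↔ ∀ i, η i X = 0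
  hgsymm : ∀ X Y, g X Y = g Y X
  hgnondeg : ∀ X, (∀ Y, g X Y = 0) → X = 0
  hrank : ∀ Z, (∀ i, η i Z = 0) → (∀ Y, g Z (f Y) = 0) → Z = 0
  hgcompat : ∀ X Y, g (f X) (f Y) = -(g X (Q Y)) + ∑ i, η i X * η i Y
  hbskew : ∀ X Y, b X Y = - b Y X
  hbaddl : ∀ X Y Z, b (X + Y) Z = b X Z + b Y Z
  hjacobi : ∀ X Y Z, b X (b Y Z) + b Y (b Z X) + b Z (b X Y) = 0
  hactadd : ∀ X a c, act X (a + c) = act X a + act X c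
  hactmul : ∀ X a c, act X (a * c) = act X a * c + a * act X c
  hactX : ∀ (a : C) X Y c, act (a • X + Y) c = a * act X c + act Y c
  hbleib : ∀ X (a : C) Y, b X (a • Y) = act X a • Y + a • b X Y
  hnab1 : ∀ (a : C) X X' Y, nabla (a • X + X') Y = a • nabla X Y + nabla X' Y
  hnabadd : ∀ X Y Z, nabla X (Y + Z) = nabla X Y + nabla X Z
  hnableib : ∀ X (a : C) Y, nabla X (a • Y) = act X a • Y + a • nabla X Y
  htors : ∀ X Y, nabla X Y - nabla Y X = b X Y
  hmetric : ∀ X Y Z, act X (g Y Z) = g (nabla X Y) Z + g Y (nabla X Z)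

namespace MWPF

variable {C V} {p : ℕ} (s : MWPF C V p)

/-- The fundamental 2-form `Φ(X,Y) = g(X, fY)`. -/
def Phi (X Y : V) : C := s.g X (s.f Y)

/-- `dη^i(X,Y) = (1/2)(X(η^i Y) - Y(η^i X) - η^i [X,Y])`. -/
def dEta (i : Fin p) (X Y : V) : C :=
  (2⁻¹ : ℝ) • (s.act X (s.η i Y) - s.act Y (s.η i X) - s.η i (s.b X Y))

/-- The Nijenhuis torsion `[f,f]`. -/
def Nij (X Y : V) : V :=
  s.f (s.f (s.b X Y)) + s.b (s.f X) (s.f Y) - s.f (s.b (s.f X) Y) - s.f (s.b X (s.f Y))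

/-- `N^(1)(X,Y) = [f,f](X,Y) - 2 Σ_i dη^i(X,Y) ξ_i`. -/
def N1 (X Y : V) : V := s.Nij X Y - (2 : ℝ) • ∑ i, s.dEta i X Y • s.ξ i

/-- The difference tensor `Q̃ = Q - id`. -/
def Qt (X : V) : V := s.Q X - X

/-- The Lie derivative of `f`: `(£_Z f)X = [Z, fX] - f[Z,X]`. -/
def Lief (Z X : V) : V := s.b Z (s.f X) - s.f (s.b Z X)

/-- The Lie derivative of `g`: `(£_Z g)(X,Y) = Z(g(X,Y)) - g([Z,X],Y) - g(X,[Z,Y])`. -/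
def Lieg (Z X Y : V) : C := s.act Z (s.g X Y) - s.g (s.b Z X) Y - s.g X (s.b Z Y)

/-- `N^(2)_i(X,Y) = (£_{fX} η^i)Y - (£_{fY} η^i)X`. -/
def N2 (i : Fin p) (X Y : V) : C :=
  (s.act (s.f X) (s.η i Y) - s.η i (s.b (s.f X) Y))
    - (s.act (s.f Y) (s.η i X) - s.η i (s.b (s.f Y) X))

/-- The exterior differential of the fundamental 2-form. -/
def dPhi (X Y Z : V) : C := (3⁻¹ : ℝ) •
  (s.act X (s.Phi Y Z) + s.act Y (s.Phi Z X) + s.act Z (s.Phi X Y)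
    - s.Phi (s.b X Y) Z - s.Phi (s.b Z X) Y - s.Phi (s.b Y Z) X)

/-- The tensor `h_i = (1/2) £_{ξ_i} f`. -/
def hmap (i : Fin p) (X : V) : V := (2⁻¹ : ℝ) • s.Lief (s.ξ i) X

/-- The tensor `N^(5)`. -/
def N5 (X Y Z : V) : C :=
  s.act (s.f Z) (s.g X (s.Qt Y)) - s.act (s.f Y) (s.g X (s.Qt Z))
    + s.g (s.b X (s.f Z)) (s.Qt Y) - s.g (s.b X (s.f Y)) (s.Qt Z)
    + s.g (s.b Y (s.f Z) - s.b Z (s.f Y) - s.f (s.b Y Z)) (s.Qt X)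

/-- The curvature tensor of `nabla`. -/
def Rm (X Y Z : V) : V :=
  s.nabla X (s.nabla Y Z) - s.nabla Y (s.nabla X Z) - s.nabla (s.b X Y) Z

end MWPF

/-- on a weak almost para-S-manifold, `h_i ξ_j = 0`, where
`h_i = (1/2) £_{ξ_i} f`. -/
theorem paraS_h_xi_zero {C V : Type*} [CommRing C] [Algebra ℝ C] [AddCommGroup V]
    [Module ℝ V] [Module C V] [IsScalarTower ℝ C V] {p : ℕ} (s : MWPF C V p)
    (hS : ∀ (i : Fin p) (X Y : V), s.dEta i X Y = s.Phi X Y) :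
    ∀ i j : Fin p, s.hmap i (s.ξ j) = 0 := by
  intro i j
  -- basic facts about `act` on constants
  have hact0 : ∀ X : V, s.act X 0 = 0 := by
    intro X
    have h := s.hactadd X 0 0
    rw [add_zero] at h
    exact (left_eq_add.mp h)
  have hact1 : ∀ X : V, s.act X 1 = 0 := by
    intro X
    have h := s.hactmul X 1 1
    rw [mul_one, mul_one, one_mul] at h
    exact (left_eq_add.mp h)
  have hactconst : ∀ (X : V) (k l : Fin p), s.act X (s.η k (s.ξ l)) = 0 := by
    intro X k l
    rw [s.hetaxi]
    split_ifs
    · exact hact1 X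
    · exact hact0 X
  -- halving lemma
  have hhalf : ∀ c : C, (2⁻¹ : ℝ) • c = 0 → c = 0 := by
    intro c hc
    have h2 := congrArg (fun x : C => (2 : ℝ) • x) hc
    simpa [smul_smul, (by norm_num : (2 : ℝ) * 2⁻¹ = 1)] using h2
  -- bracket is additive / zero / neg in the second argument
  have hbadd2 : ∀ (U W W' : V), s.b U (W + W') = s.b U W + s.b U W' := by
    intro U W W'
    rw [s.hbskew U (W + W'), s.hbaddl, s.hbskew W U, s.hbskew W' U]
    abel
  have hb0 : ∀ U : V, s.b U 0 = 0 := by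
    intro U
    have h := hbadd2 U 0 0
    rw [add_zero] at h
    exact (left_eq_add.mp h)
  have hbneg2 : ∀ U W : V, s.b U (-W) = -(s.b U W) := by
    intro U W
    have h := hbadd2 U W (-W)
    rw [show W + -W = (0 : V) from by abel, hb0] at h
    exact (neg_eq_of_add_eq_zero_right h.symm).symm
  -- skew-symmetry of Φ
  have hskew : ∀ X Y : V, s.g X (s.f Y) = -(s.g Y (s.f X)) := by
    intro X Y
    have h1 := hS i X Y
    have h2 := hS i Y X
    simp only [MWPF.dEta, MWPF.Phi] at h1 h2
    rw [s.hbskew Y X, map_neg] at h2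
    have hsum : s.g X (s.f Y) + s.g Y (s.f X) = 0 := by
      rw [← h1, ← h2, ← smul_add]
      rw [show (s.act X (s.η i Y) - s.act Y (s.η i X) - s.η i (s.b X Y))
          + (s.act Y (s.η i X) - s.act X (s.η i Y) - -(s.η i (s.b X Y))) = (0 : C) from by ring]
      exact smul_zero _
    exact eq_neg_of_add_eq_zero_left hsum
  -- f (f ξ) = 0
  have hffxi : ∀ k : Fin p, s.f (s.f (s.ξ k)) = 0 := by
    intro k
    rw [s.hf2 (s.ξ k), s.hQxi k]
    rw [sub_eq_zero]
    simp [s.hetaxi, ite_smul]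
  -- f ξ = 0
  have hfxi : ∀ k : Fin p, s.f (s.ξ k) = 0 := by
    intro k
    apply s.hrank
    · intro l
      exact (s.hrange (s.f (s.ξ k))).mp ⟨s.ξ k, rfl⟩ l
    · intro Y
      rw [hskew (s.f (s.ξ k)) Y, hffxi k, map_zero, neg_zero]
  -- η_k [ξ_l, Y] = ξ_l (η_k Y)
  have hetab : ∀ (k l : Fin p) (Y : V),
      s.η k (s.b (s.ξ l) Y) = s.act (s.ξ l) (s.η k Y) := by
    intro k l Y
    have h := hS k (s.ξ l) Y
    simp only [MWPF.dEta, MWPF.Phi] at h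
    rw [hskew (s.ξ l) Y, hfxi l, map_zero, neg_zero] at h
    rw [hactconst Y k l] at h
    have h2 := hhalf _ h
    linear_combination -h2
  -- act respects brackets (via Jacobi and the Leibniz rule)
  have hactb : ∀ (X Y : V) (a : C),
      s.act (s.b X Y) a = s.act X (s.act Y a) - s.act Y (s.act X a) := by
    intro X Y a
    have e1 : s.b X (s.b Y (a • s.ξ j)) =
        s.act X (s.act Y a) • s.ξ j + s.act Y a • s.b X (s.ξ j)
          + s.act X a • s.b Y (s.ξ j) + a • s.b X (s.b Y (s.ξ j)) := by
      rw [s.hbleib Y a (s.ξ j), hbadd2 X (s.act Y a • s.ξ j) (a • s.b Y (s.ξ j)),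
        s.hbleib X (s.act Y a) (s.ξ j), s.hbleib X a (s.b Y (s.ξ j))]
      abel
    have e2 : s.b Y (s.b X (a • s.ξ j)) =
        s.act Y (s.act X a) • s.ξ j + s.act X a • s.b Y (s.ξ j)
          + s.act Y a • s.b X (s.ξ j) + a • s.b Y (s.b X (s.ξ j)) := by
      rw [s.hbleib X a (s.ξ j), hbadd2 Y (s.act X a • s.ξ j) (a • s.b X (s.ξ j)),
        s.hbleib Y (s.act X a) (s.ξ j), s.hbleib Y a (s.b X (s.ξ j))]
      abel
    have J := s.hjacobi X Y (a • s.ξ j)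
    rw [s.hbskew (a • s.ξ j) X, s.hbskew (a • s.ξ j) (s.b X Y),
      hbneg2 Y (s.b X (a • s.ξ j)), e1, e2, s.hbleib (s.b X Y) a (s.ξ j)] at J
    have Jx := s.hjacobi X Y (s.ξ j)
    rw [s.hbskew (s.ξ j) X, s.hbskew (s.ξ j) (s.b X Y),
      hbneg2 Y (s.b X (s.ξ j))] at Jx
    have key : (s.act X (s.act Y a) - s.act Y (s.act X a) - s.act (s.b X Y) a) • s.ξ j
        = 0 := by
      linear_combination (norm := module) J - a • Jx
    have hc := congrArg (s.η j) key
    rw [map_smul, map_zero, s.hetaxi, if_pos rfl, smul_eq_mul, mul_one] at hc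
    linear_combination -hc
  -- η_k [ξ_i, ξ_j] = 0
  have hetaB : ∀ k : Fin p, s.η k (s.b (s.ξ i) (s.ξ j)) = 0 := by
    intro k
    have h := hS k (s.ξ i) (s.ξ j)
    simp only [MWPF.dEta, MWPF.Phi] at h
    rw [hfxi j, map_zero] at h
    rw [hactconst (s.ξ i) k j, hactconst (s.ξ j) k i] at h
    have h2 := hhalf _ h
    linear_combination -h2
  -- g([ξ_i,ξ_j], f W) = 0
  have hgB : ∀ W : V, s.g (s.b (s.ξ i) (s.ξ j)) (s.f W) = 0 := by
    intro W
    have h := (hS i (s.b (s.ξ i) (s.ξ j)) W).symm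
    simp only [MWPF.dEta, MWPF.Phi] at h
    rw [hetaB i, hact0 W] at h
    have h8 : s.η i (s.b (s.b (s.ξ i) (s.ξ j)) W)
        = s.act (s.ξ i) (s.act (s.ξ j) (s.η i W))
          - s.act (s.ξ j) (s.act (s.ξ i) (s.η i W)) := by
      have Jc := congrArg (s.η i) (s.hjacobi (s.ξ i) (s.ξ j) W)
      rw [map_add, map_add, map_zero] at Jc
      rw [s.hbskew W (s.ξ i), hbneg2 (s.ξ j) (s.b (s.ξ i) W),
        s.hbskew W (s.b (s.ξ i) (s.ξ j)), map_neg, map_neg,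
        hetab i i (s.b (s.ξ j) W), hetab i j (s.b (s.ξ i) W),
        hetab i j W, hetab i i W] at Jc
      linear_combination -Jc
    rw [h8, hactb (s.ξ i) (s.ξ j) (s.η i W)] at h
    rw [h, sub_zero, sub_self, smul_zero]
  -- [ξ_i, ξ_j] = 0
  have hB : s.b (s.ξ i) (s.ξ j) = 0 := s.hrank _ hetaB hgB
  -- conclude
  simp only [MWPF.hmap, MWPF.Lief]
  rw [hfxi j, hb0 (s.ξ i), hB, map_zero, sub_zero, smul_zero]
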